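/- For every $n\in\mathbb{N}$ let $f_n:Q\times\mathbb{R}^d\to[0,+\infty)$ be continuous functions satisfying $\sup_n f_n(y,\xi)\le C(1+|\xi|^q)$ for all $y\in Q$, $\xi\in\mathbb{R}^d$, for some $C>0$ and $q>1$, and assume the family $\{f_n(y,\cdot)\}_{n,y}$ is equicontinuous on $\mathbb{R}^d$ uniformly in $y\in Q$. Let $\{w_n\}\subset L^q(Q;\mathbb{R}^d)$ be $q$-equiintegrable and let $v_n\to 0$ strongly in $L^q(Q;\mathbb{R}^d)$. Then $\lim_{n\to\infty}\big|\int_Q f_n(y,w_n(y))\,dy - \int_Q f_n(y,v_n(y)+w_n(y))\,dy\big| = 0$. -/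

import Mathlib

open MeasureTheory Filter Set


lemma aux_meas_rpow {α : Type*} [MeasurableSpace α] {d : ℕ} {u : α → (Fin d → ℝ)}
    (hu : Measurable u) (q : ℝ) : Measurable fun y => ‖u y‖ ^ q := by fun_prop

lemma aux_pow_add_le {q : ℝ} (hq : 0 ≤ q) {a b : ℝ} (ha : 0 ≤ a) (hb : 0 ≤ b) :
    (a + b) ^ q ≤ 2 ^ q * (a ^ q + b ^ q) := by
  have hmax : a + b ≤ 2 * max a b := by
    rcases le_total a b with h | h
    · rw [max_eq_right h]; linarith
    · rw [max_eq_left h]; linarith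
  have h1 : (a + b) ^ q ≤ (2 * max a b) ^ q :=
    Real.rpow_le_rpow (by linarith) hmax hq
  have h2 : (2 * max a b : ℝ) ^ q = 2 ^ q * (max a b) ^ q :=
    Real.mul_rpow (by norm_num) (le_max_of_le_left ha)
  have h3 : (max a b) ^ q ≤ a ^ q + b ^ q := by
    rcases le_total a b with h | h
    · rw [max_eq_right h]
      have := Real.rpow_nonneg ha q; linarith
    · rw [max_eq_left h]
      have := Real.rpow_nonneg hb q; linarith
  have h4 : (0:ℝ) ≤ 2 ^ q := Real.rpow_nonneg (by norm_num) q
  calc (a+b)^q ≤ 2^q * (max a b)^q := by rw [← h2]; exact h1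
    _ ≤ 2^q * (a^q + b^q) := mul_le_mul_of_nonneg_left h3 h4

lemma aux_integrable_comp {N d : ℕ} {q C : ℝ} {Q : Set (Fin N → ℝ)} (hQm : MeasurableSet Q)
    (hQfin : volume Q ≠ ⊤)
    {f : (Fin N → ℝ) → (Fin d → ℝ) → ℝ}
    (hf : Continuous (fun p : (Fin N → ℝ) × (Fin d → ℝ) => f p.1 p.2))
    (hpos : ∀ y ξ, 0 ≤ f y ξ)
    (hb : ∀ y ∈ Q, ∀ ξ, f y ξ ≤ C * (1 + ‖ξ‖ ^ q))
    {u : (Fin N → ℝ) → (Fin d → ℝ)} (hu : Measurable u)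
    (huq : Integrable (fun y => ‖u y‖ ^ q) (volume.restrict Q)) :
    Integrable (fun y => f y (u y)) (volume.restrict Q) := by
  haveI : IsFiniteMeasure (volume.restrict Q) := by
    constructor
    rw [Measure.restrict_apply_univ]
    exact lt_top_iff_ne_top.mpr hQfin
  have hmeas : Measurable (fun y => f y (u y)) :=
    hf.measurable.comp (measurable_id.prodMk hu)
  have hbound : Integrable (fun y => C * (1 + ‖u y‖ ^ q)) (volume.restrict Q) :=
    ((integrable_const 1).add huq).const_mul C
  refine hbound.mono' hmeas.aestronglyMeasurable ?_
  rw [ae_restrict_iff' hQm]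
  filter_upwards with y hy
  rw [Real.norm_eq_abs, abs_of_nonneg (hpos y (u y))]
  exact hb y hy (u y)



set_option maxHeartbeats 2000000
/-- Proposition 3.2: vanishing `L^q` perturbations of a `q`-equiintegrable sequence do not
change the limits of the integral energies.  Here `Q` is the unit cube in `ℝ^N`,
the `f n` are continuous nonnegative integrands with uniform `q`-growth which are
equicontinuous in the second variable uniformly in `y ∈ Q` and `n`, the sequence `w n` is
`q`-equiintegrable, and `v n → 0` strongly in `L^q(Q; ℝ^d)`. -/
theorem stmt_1 (N d : ℕ) (q C : ℝ) (hq : 1 < q) (hC : 0 < C)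
    (Q : Set (Fin N → ℝ)) (hQ : Q = {y | ∀ i, |y i| < 1/2})
    (f : ℕ → (Fin N → ℝ) → (Fin d → ℝ) → ℝ)
    (hfcont : ∀ n, Continuous (fun p : (Fin N → ℝ) × (Fin d → ℝ) => f n p.1 p.2))
    (hfnonneg : ∀ n y ξ, 0 ≤ f n y ξ)
    (hfgrowth : ∀ n, ∀ y ∈ Q, ∀ ξ, f n y ξ ≤ C * (1 + ‖ξ‖ ^ q))
    (hfequicont : ∀ ε : ℝ, 0 < ε → ∃ δ : ℝ, 0 < δ ∧
      ∀ n, ∀ y ∈ Q, ∀ ξ₁ ξ₂ : Fin d → ℝ, ‖ξ₁ - ξ₂‖ < δ → |f n y ξ₁ - f n y ξ₂| < ε)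
    (w v : ℕ → (Fin N → ℝ) → (Fin d → ℝ))
    (hw : ∀ n, Measurable (w n)) (hv : ∀ n, Measurable (v n))
    (hwq : ∀ n, Integrable (fun y => ‖w n y‖ ^ q) (volume.restrict Q))
    (hvq : ∀ n, Integrable (fun y => ‖v n y‖ ^ q) (volume.restrict Q))
    -- `q`-equiintegrability of `w`
    (hwequi : ∀ η : ℝ, 0 < η → ∃ ε : ℝ, 0 < ε ∧ ∀ A ⊆ Q, MeasurableSet A →
      volume A < ENNReal.ofReal ε → ∀ n, ∫ y in A, ‖w n y‖ ^ q < η)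
    -- `v n → 0` strongly in `L^q(Q; ℝ^d)`
    (hv0 : Tendsto (fun n => ∫ y in Q, ‖v n y‖ ^ q) atTop (nhds 0)) :
    Tendsto (fun n =>
        |(∫ y in Q, f n y (w n y)) - ∫ y in Q, f n y (v n y + w n y)|) atTop (nhds 0) := by
  have hq0 : (0:ℝ) < q := by linarith
  have hQeqPi : Q = Set.pi Set.univ (fun _ : Fin N => Set.Ioo (-(1/2):ℝ) (1/2)) := by
    rw [hQ]; ext y; simp [Set.mem_pi, Set.mem_Ioo, abs_lt]
  have hQm : MeasurableSet Q := by
    rw [hQeqPi]; exact MeasurableSet.univ_pi (fun i => measurableSet_Ioo)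
  have hQvol : volume Q = 1 := by rw [hQeqPi, volume_pi_pi]; norm_num
  have hQfin : volume Q ≠ ⊤ := by rw [hQvol]; exact ENNReal.one_ne_top
  rw [Metric.tendsto_atTop]
  intro ε hε
  -- equicontinuity
  obtain ⟨δ, hδ, hδf⟩ := hfequicont (ε/3) (by linarith)
  have h2q : (0:ℝ) < 2 ^ q := Real.rpow_pos_of_pos (by norm_num) q
  set K : ℝ := C * (3 + 2 * 2 ^ q) with hKdef
  have hK : 0 < K := by positivity
  set η : ℝ := ε / (3 * (K + 1)) with hηdef
  have hη : 0 < η := by positivity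
  obtain ⟨ε', hε', hwε'⟩ := hwequi η hη
  set ε'' : ℝ := min ε' η with hε''def
  have hε''pos : 0 < ε'' := lt_min hε' hη
  -- bad sets
  set A : ℕ → Set (Fin N → ℝ) := fun n => Q ∩ {y | δ ≤ ‖v n y‖} with hAdef
  have hAm : ∀ n, MeasurableSet (A n) := fun n =>
    hQm.inter (measurableSet_le measurable_const (hv n).norm)
  have hAQ : ∀ n, A n ⊆ Q := fun n => Set.inter_subset_left
  have hAfin : ∀ n, volume (A n) ≠ ⊤ := fun n =>
    ne_top_of_le_ne_top hQfin (measure_mono (hAQ n))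
  have hvnonneg : ∀ n, (0:(Fin N → ℝ) → ℝ) ≤ᵐ[volume.restrict Q] fun y => ‖v n y‖ ^ q :=
    fun n => Eventually.of_forall fun y => Real.rpow_nonneg (norm_nonneg (v n y)) q
  -- Chebyshev
  have hδq : (0:ℝ) < δ ^ q := Real.rpow_pos_of_pos hδ q
  have hcheb : ∀ n, (volume (A n)).toReal ≤ (∫ y in Q, ‖v n y‖ ^ q) / δ ^ q := by
    intro n
    have h1 : ∫ _ in A n, (δ ^ q : ℝ) ≤ ∫ y in A n, ‖v n y‖ ^ q := by
      refine setIntegral_mono_on ((integrableOn_const_iff enorm_ne_top).mpr (Or.inr ?_))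
        (IntegrableOn.mono_set (hvq n) (hAQ n)) (hAm n) (fun y hy => ?_)
      · exact lt_top_iff_ne_top.mpr (hAfin n)
      · exact Real.rpow_le_rpow hδ.le hy.2 hq0.le
    have h2 : ∫ y in A n, ‖v n y‖ ^ q ≤ ∫ y in Q, ‖v n y‖ ^ q :=
      setIntegral_mono_set (hvq n) (hvnonneg n) (HasSubset.Subset.eventuallyLE (hAQ n))
    rw [setIntegral_const, smul_eq_mul, measureReal_def] at h1
    rw [le_div_iff₀ hδq]
    linarith
  have hto0 : Tendsto (fun n => (volume (A n)).toReal) atTop (nhds 0) := by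
    have := hv0.div_const (δ ^ q)
    rw [zero_div] at this
    exact squeeze_zero (fun n => ENNReal.toReal_nonneg) hcheb this
  have hEv : ∀ᶠ n in atTop, (volume (A n)).toReal < ε'' ∧ (∫ y in Q, ‖v n y‖ ^ q) < η :=
    (hto0.eventually (eventually_lt_nhds hε''pos)).and (hv0.eventually (eventually_lt_nhds hη))
  obtain ⟨M, hM⟩ := eventually_atTop.mp hEv
  refine ⟨M, fun n hn => ?_⟩
  obtain ⟨hAsmall, hvsmall⟩ := hM n hn

  -- fixed n ≥ M : main estimate
  haveI : IsFiniteMeasure (volume.restrict Q) := by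
    constructor
    rw [Measure.restrict_apply_univ]
    exact lt_top_iff_ne_top.mpr hQfin
  -- integrability of the perturbed power
  have hvwq : Integrable (fun y => ‖v n y + w n y‖ ^ q) (volume.restrict Q) := by
    have hmeas : Measurable fun y => ‖v n y + w n y‖ ^ q :=
      aux_meas_rpow ((hv n).add (hw n)) q
    refine (((hvq n).add (hwq n)).const_mul (2 ^ q)).mono'
      hmeas.aestronglyMeasurable ?_
    filter_upwards with y
    rw [Real.norm_eq_abs, abs_of_nonneg (Real.rpow_nonneg (norm_nonneg _) q)]
    calc ‖v n y + w n y‖ ^ q ≤ (‖v n y‖ + ‖w n y‖) ^ q :=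
          Real.rpow_le_rpow (norm_nonneg _) (norm_add_le _ _) hq0.le
      _ ≤ 2 ^ q * (‖v n y‖ ^ q + ‖w n y‖ ^ q) :=
          aux_pow_add_le hq0.le (norm_nonneg _) (norm_nonneg _)
  have hg : Integrable (fun y => f n y (w n y)) (volume.restrict Q) :=
    aux_integrable_comp hQm hQfin (hfcont n) (hfnonneg n) (hfgrowth n) (hw n) (hwq n)
  have hh : Integrable (fun y => f n y (v n y + w n y)) (volume.restrict Q) :=
    aux_integrable_comp hQm hQfin (hfcont n) (hfnonneg n) (hfgrowth n)
      ((hv n).add (hw n)) hvwq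
  have habs_int : IntegrableOn (fun y => |f n y (w n y) - f n y (v n y + w n y)|) Q volume :=
    (hg.sub hh).abs
  have key1 : |(∫ y in Q, f n y (w n y)) - ∫ y in Q, f n y (v n y + w n y)|
      ≤ ∫ y in Q, |f n y (w n y) - f n y (v n y + w n y)| := by
    rw [← integral_sub hg hh]
    simpa [Real.norm_eq_abs] using
      norm_integral_le_integral_norm (μ := volume.restrict Q)
        (fun y => f n y (w n y) - f n y (v n y + w n y))
  have hsplit : (∫ y in Q, |f n y (w n y) - f n y (v n y + w n y)|)
      = (∫ y in A n, |f n y (w n y) - f n y (v n y + w n y)|)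
        + ∫ y in Q \ A n, |f n y (w n y) - f n y (v n y + w n y)| := by
    rw [← setIntegral_union disjoint_sdiff_right (hQm.diff (hAm n))
      (habs_int.mono_set (hAQ n)) (habs_int.mono_set diff_subset),
      Set.union_diff_cancel (hAQ n)]
  -- good set bound
  have hgood : (∫ y in Q \ A n, |f n y (w n y) - f n y (v n y + w n y)|) ≤ ε / 3 := by
    have hb : ∀ y ∈ Q \ A n, |f n y (w n y) - f n y (v n y + w n y)| ≤ ε / 3 := by
      intro y hy
      have hyQ : y ∈ Q := hy.1
      have hvy : ‖v n y‖ < δ := by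
        by_contra hcon
        exact hy.2 ⟨hyQ, le_of_not_gt hcon⟩
      refine (hδf n y hyQ (w n y) (v n y + w n y) ?_).le
      have heq : w n y - (v n y + w n y) = -(v n y) := by abel
      rw [heq, norm_neg]; exact hvy
    have hQA : volume (Q \ A n) ≠ ⊤ := ne_top_of_le_ne_top hQfin (measure_mono diff_subset)
    calc (∫ y in Q \ A n, |f n y (w n y) - f n y (v n y + w n y)|)
        ≤ ∫ _ in Q \ A n, (ε / 3 : ℝ) :=
          setIntegral_mono_on (habs_int.mono_set diff_subset)
            ((integrableOn_const_iff enorm_ne_top).mpr (Or.inr (lt_top_iff_ne_top.mpr hQA)))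
            (hQm.diff (hAm n)) hb
      _ = (volume (Q \ A n)).toReal * (ε / 3) := by rw [setIntegral_const, smul_eq_mul, measureReal_def]
      _ ≤ 1 * (ε / 3) := by
          have h1 : volume (Q \ A n) ≤ 1 := hQvol ▸ measure_mono diff_subset
          have h2 : (volume (Q \ A n)).toReal ≤ 1 := by
            simpa using ENNReal.toReal_mono ENNReal.one_ne_top h1
          nlinarith
      _ = ε / 3 := one_mul _
  -- bad set bound
  set B : (Fin N → ℝ) → ℝ := fun y =>
    C * 2 + (C * (1 + 2 ^ q)) * ‖w n y‖ ^ q + (C * 2 ^ q) * ‖v n y‖ ^ q with hBdef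
  have hBint : IntegrableOn B (A n) volume := by
    refine ((((integrableOn_const_iff enorm_ne_top).mpr (Or.inr (lt_top_iff_ne_top.mpr (hAfin n)))).add
      ((IntegrableOn.mono_set (hwq n) (hAQ n)).const_mul _)).add
      ((IntegrableOn.mono_set (hvq n) (hAQ n)).const_mul _))
  have hptwise : ∀ y ∈ A n, |f n y (w n y) - f n y (v n y + w n y)| ≤ B y := by
    intro y hy
    have hyQ : y ∈ Q := hy.1
    have h1 : f n y (w n y) ≤ C * (1 + ‖w n y‖ ^ q) := hfgrowth n y hyQ _
    have h2 : f n y (v n y + w n y) ≤ C * (1 + ‖v n y + w n y‖ ^ q) := hfgrowth n y hyQ _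
    have h3 : ‖v n y + w n y‖ ^ q ≤ 2 ^ q * (‖v n y‖ ^ q + ‖w n y‖ ^ q) := by
      calc ‖v n y + w n y‖ ^ q ≤ (‖v n y‖ + ‖w n y‖) ^ q :=
            Real.rpow_le_rpow (norm_nonneg _) (norm_add_le _ _) hq0.le
        _ ≤ 2 ^ q * (‖v n y‖ ^ q + ‖w n y‖ ^ q) :=
            aux_pow_add_le hq0.le (norm_nonneg _) (norm_nonneg _)
    have h4 := hfnonneg n y (w n y)
    have h5 := hfnonneg n y (v n y + w n y)
    have h6 : |f n y (w n y) - f n y (v n y + w n y)|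
        ≤ f n y (w n y) + f n y (v n y + w n y) := by
      rw [abs_le]; constructor <;> nlinarith
    have h7 := mul_le_mul_of_nonneg_left h3 hC.le
    show |f n y (w n y) - f n y (v n y + w n y)|
        ≤ C * 2 + (C * (1 + 2 ^ q)) * ‖w n y‖ ^ q + (C * 2 ^ q) * ‖v n y‖ ^ q
    nlinarith
  have hbadle : (∫ y in A n, |f n y (w n y) - f n y (v n y + w n y)|) ≤ ∫ y in A n, B y :=
    setIntegral_mono_on (habs_int.mono_set (hAQ n)) hBint (hAm n) hptwise
  have hBcalc : (∫ y in A n, B y)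
      = C * 2 * (volume (A n)).toReal + (C * (1 + 2 ^ q)) * (∫ y in A n, ‖w n y‖ ^ q)
        + (C * 2 ^ q) * (∫ y in A n, ‖v n y‖ ^ q) := by
    have i1 : Integrable (fun _ : Fin N → ℝ => C * 2) (volume.restrict (A n)) :=
      (integrableOn_const_iff enorm_ne_top).mpr (Or.inr (lt_top_iff_ne_top.mpr (hAfin n)))
    have i2 : Integrable (fun y => (C * (1 + 2 ^ q)) * ‖w n y‖ ^ q) (volume.restrict (A n)) :=
      (IntegrableOn.mono_set (hwq n) (hAQ n)).const_mul _
    have i3 : Integrable (fun y => (C * 2 ^ q) * ‖v n y‖ ^ q) (volume.restrict (A n)) :=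
      (IntegrableOn.mono_set (hvq n) (hAQ n)).const_mul _
    have i12 : Integrable (fun y => C * 2 + (C * (1 + 2 ^ q)) * ‖w n y‖ ^ q)
        (volume.restrict (A n)) := i1.add i2
    have e1 : (∫ y in A n, B y)
        = (∫ y in A n, (C * 2 + (C * (1 + 2 ^ q)) * ‖w n y‖ ^ q))
          + ∫ y in A n, (C * 2 ^ q) * ‖v n y‖ ^ q := integral_add i12 i3
    have e2 : (∫ y in A n, (C * 2 + (C * (1 + 2 ^ q)) * ‖w n y‖ ^ q))
        = (∫ _ in A n, (C * 2 : ℝ)) + ∫ y in A n, (C * (1 + 2 ^ q)) * ‖w n y‖ ^ q :=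
      integral_add i1 i2
    rw [e1, e2, setIntegral_const, smul_eq_mul, measureReal_def, integral_const_mul, integral_const_mul]
    ring
  -- numerical estimates
  have htA : (volume (A n)).toReal < η := lt_of_lt_of_le hAsmall (min_le_right _ _)
  have hIw : (∫ y in A n, ‖w n y‖ ^ q) < η := by
    refine hwε' (A n) (hAQ n) (hAm n) ?_ n
    exact (ENNReal.lt_ofReal_iff_toReal_lt (hAfin n)).mpr
      (lt_of_lt_of_le hAsmall (min_le_left _ _))
  have hIv : (∫ y in A n, ‖v n y‖ ^ q) < η :=
    lt_of_le_of_lt (setIntegral_mono_set (hvq n) (hvnonneg n)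
      (HasSubset.Subset.eventuallyLE (hAQ n))) hvsmall
  have hKη : K * η < ε / 3 := by
    rw [hηdef, ← mul_div_assoc, div_lt_div_iff₀ (by positivity) (by norm_num)]
    nlinarith
  have hsum : C * 2 * (volume (A n)).toReal + (C * (1 + 2 ^ q)) * (∫ y in A n, ‖w n y‖ ^ q)
      + (C * 2 ^ q) * (∫ y in A n, ‖v n y‖ ^ q) < ε / 3 := by
    have e1 : C * 2 * (volume (A n)).toReal < C * 2 * η :=
      mul_lt_mul_of_pos_left htA (by positivity)
    have e2 : (C * (1 + 2 ^ q)) * (∫ y in A n, ‖w n y‖ ^ q) < (C * (1 + 2 ^ q)) * η :=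
      mul_lt_mul_of_pos_left hIw (by positivity)
    have e3 : (C * 2 ^ q) * (∫ y in A n, ‖v n y‖ ^ q) < (C * 2 ^ q) * η :=
      mul_lt_mul_of_pos_left hIv (by positivity)
    have hKexp : C * 2 * η + (C * (1 + 2 ^ q)) * η + (C * 2 ^ q) * η = K * η := by
      rw [hKdef]; ring
    linarith
  -- conclusion
  rw [Real.dist_eq, sub_zero, abs_abs]
  calc |(∫ y in Q, f n y (w n y)) - ∫ y in Q, f n y (v n y + w n y)|
      ≤ ∫ y in Q, |f n y (w n y) - f n y (v n y + w n y)| := key1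
    _ = (∫ y in A n, |f n y (w n y) - f n y (v n y + w n y)|)
        + ∫ y in Q \ A n, |f n y (w n y) - f n y (v n y + w n y)| := hsplit
    _ < ε / 3 + ε / 3 := by
        have hb' : (∫ y in A n, |f n y (w n y) - f n y (v n y + w n y)|) < ε / 3 :=
          lt_of_le_of_lt (hbadle.trans (le_of_eq hBcalc)) hsum
        linarith
    _ < ε := by linarith
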